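/- Let f : ℝ^N → ℝ be twice continuously differentiable and let x : ℝ → ℝ^N be a non-constant p-periodic (p > 0) twice continuously differentiable solution of ẍ(t) = -∇f(x(t)). Let M ≥ sup_{t∈ℝ} ‖x(t)‖ and set K := sup{‖∇²f(y)‖ : y ∈ ℝ^N, ‖y‖ ≤ M}, where ‖∇²f(y)‖ is the operator norm of the Hessian of f at y. Then K > 0 and p² ≥ 1/K. -/

import Mathlib

open intervalIntegral Set

lemma mean_zero_bound {E : Type*} [NormedAddCommGroup E] [NormedSpace ℝ E] [CompleteSpace E]
    {h : ℝ → E} {p : ℝ} (hp : 0 < p) (hcont : Continuous h)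
    (hint : ∫ s in (0:ℝ)..p, h s = 0) {v : E} {C : ℝ}
    (hv : ∀ s ∈ Set.Icc (0:ℝ) p, ‖v - h s‖ ≤ C) : ‖v‖ ≤ C := by
  have key : p • v = ∫ s in (0:ℝ)..p, (v - h s) := by
    rw [intervalIntegral.integral_sub intervalIntegrable_const
      (hcont.intervalIntegrable _ _), hint, intervalIntegral.integral_const]
    simp
  have hb : ‖∫ s in (0:ℝ)..p, (v - h s)‖ ≤ C * |p - 0| := by
    refine intervalIntegral.norm_integral_le_of_norm_le_const (fun s hs => ?_)
    refine hv s ?_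
    rw [Set.uIoc_of_le hp.le] at hs
    exact ⟨hs.1.le, hs.2⟩
  rw [← key, norm_smul, Real.norm_eq_abs, abs_of_pos hp] at hb
  rw [sub_zero, abs_of_pos hp] at hb
  exact le_of_mul_le_mul_left (by linarith) hp

lemma periodic_reduce {E : Type*} (x : ℝ → E) {p : ℝ} (hp : 0 < p)
    (hper : Function.Periodic x p) (t : ℝ) :
    ∃ t' ∈ Set.Icc (0:ℝ) p, x t' = x t := by
  obtain ⟨t', ht', e⟩ := hper.exists_mem_Ico₀ hp t
  exact ⟨t', ⟨ht'.1, ht'.2.le⟩, e.symm⟩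

set_option maxHeartbeats 2000000 in
theorem minimal_period_bound
    {N : ℕ} (f : EuclideanSpace ℝ (Fin N) → ℝ) (hf : ContDiff ℝ 2 f)
    (p : ℝ) (hp : 0 < p)
    (x : ℝ → EuclideanSpace ℝ (Fin N)) (hx : ContDiff ℝ 2 x)
    (hper : Function.Periodic x p) (hnc : ∃ t₁ t₂, x t₁ ≠ x t₂)
    (heq : ∀ t : ℝ, deriv (deriv x) t = -gradient f (x t))
    (M : ℝ) (hM : ∀ t : ℝ, ‖x t‖ ≤ M)
    (K : ℝ)
    (hK : K = sSup {c : ℝ | ∃ y : EuclideanSpace ℝ (Fin N),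
      ‖y‖ ≤ M ∧ c = ‖fderiv ℝ (gradient f) y‖}) :
    0 < K ∧ 1 / K ≤ p ^ 2 := by
  have hxdiff : Differentiable ℝ x := hx.differentiable (by norm_num)
  have hx1 : ContDiff ℝ 1 (deriv x) := by
    have h2 : ContDiff ℝ ((1:WithTop ℕ∞) + 1) x := by exact_mod_cast hx
    exact (contDiff_succ_iff_deriv.mp h2).2.2
  have hx'diff : Differentiable ℝ (deriv x) := hx1.differentiable one_ne_zero
  have hx'cont : Continuous (deriv x) := hx'diff.continuous
  have hx''cont : Continuous (deriv (deriv x)) := hx1.continuous_deriv le_rfl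
  -- gradient is C¹
  have hgrad : ContDiff ℝ 1 (gradient f) := by
    have h1 : ContDiff ℝ 1 (fderiv ℝ f) := hf.fderiv_right (by norm_num)
    exact ((InnerProductSpace.toDual ℝ (EuclideanSpace ℝ (Fin N))).symm.contDiff).comp h1
  have hHesscont : Continuous (fun y : EuclideanSpace ℝ (Fin N) => ‖fderiv ℝ (gradient f) y‖) :=
    continuous_norm.comp (hgrad.continuous_fderiv one_ne_zero)
  -- K is an upper bound of Hessian norms on the ball
  have hSet : {c : ℝ | ∃ y : EuclideanSpace ℝ (Fin N), ‖y‖ ≤ M ∧ c = ‖fderiv ℝ (gradient f) y‖}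
      = (fun y : EuclideanSpace ℝ (Fin N) => ‖fderiv ℝ (gradient f) y‖) '' Metric.closedBall 0 M := by
    ext c
    simp only [Set.mem_setOf_eq, Set.mem_image, Metric.mem_closedBall, dist_zero_right]
    constructor
    · rintro ⟨y, hy, rfl⟩; exact ⟨y, hy, rfl⟩
    · rintro ⟨y, hy, rfl⟩; exact ⟨y, hy, rfl⟩
  have hbdd : BddAbove {c : ℝ | ∃ y : EuclideanSpace ℝ (Fin N), ‖y‖ ≤ M ∧ c = ‖fderiv ℝ (gradient f) y‖} := by
    rw [hSet]
    exact ((isCompact_closedBall (0:EuclideanSpace ℝ (Fin N)) M).image hHesscont).bddAbove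
  have hKub : ∀ y : EuclideanSpace ℝ (Fin N), ‖y‖ ≤ M → ‖fderiv ℝ (gradient f) y‖ ≤ K := by
    intro y hy
    rw [hK]
    exact le_csSup hbdd ⟨y, hy, rfl⟩
  -- Lipschitz bound on gradient along the orbit
  have hLip : ∀ s t : ℝ, ‖gradient f (x t) - gradient f (x s)‖ ≤ K * ‖x t - x s‖ := by
    intro s t
    refine (convex_closedBall (0:EuclideanSpace ℝ (Fin N)) M).norm_image_sub_le_of_norm_fderiv_le
      (fun y _ => hgrad.differentiable one_ne_zero y)
      (fun y hy => hKub y (by simpa [dist_zero_right] using hy)) ?_ ?_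
    · simpa [dist_zero_right] using hM s
    · simpa [dist_zero_right] using hM t
  -- derivative is periodic
  have hper1 : Function.Periodic (deriv x) p := by
    intro t
    have hxc : (fun s => x (s + p)) = x := funext fun s => hper s
    calc deriv x (t + p) = deriv (fun s => x (s + p)) t := (deriv_comp_add_const x p t).symm
    _ = deriv x t := by rw [hxc]
  -- mean-zero integrals
  have hint1 : ∫ s in (0:ℝ)..p, deriv x s = 0 := by
    rw [intervalIntegral.integral_deriv_eq_sub (fun y _ => hxdiff y)
      (hx'cont.intervalIntegrable _ _)]
    have := hper 0
    rw [zero_add] at this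
    rw [this, sub_self]
  have hint2 : ∫ s in (0:ℝ)..p, deriv (deriv x) s = 0 := by
    rw [intervalIntegral.integral_deriv_eq_sub (fun y _ => hx'diff y)
      (hx''cont.intervalIntegrable _ _)]
    have := hper1 0
    rw [zero_add] at this
    rw [this, sub_self]
  -- compact interval
  set I := Set.Icc (0:ℝ) p with hIdef
  have hIc : IsCompact I := isCompact_Icc
  have hIne : I.Nonempty := Set.nonempty_Icc.mpr hp.le
  have hsub : ∀ a b : ℝ, a ∈ I → b ∈ I → Set.uIoc a b ⊆ I := by
    intro a b ha hb u hu
    rw [Set.mem_uIoc] at hu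
    obtain ⟨ha1, ha2⟩ := ha
    obtain ⟨hb1, hb2⟩ := hb
    rcases hu with ⟨h1, h2⟩ | ⟨h1, h2⟩ <;> exact ⟨by linarith, by linarith⟩
  -- D: max distance on orbit
  have hcq : Continuous (fun q : ℝ × ℝ => ‖x q.1 - x q.2‖) := by
    have := hx.continuous
    fun_prop
  obtain ⟨q₀, hq₀, hq₀max⟩ := (hIc.prod hIc).exists_isMaxOn (hIne.prod hIne)
    hcq.continuousOn
  set D := ‖x q₀.1 - x q₀.2‖ with hDdef
  have hD : ∀ u ∈ I, ∀ v ∈ I, ‖x u - x v‖ ≤ D := fun u hu v hv =>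
    isMaxOn_iff.mp hq₀max (u, v) ⟨hu, hv⟩
  -- D > 0
  obtain ⟨t₁, t₂, hne⟩ := hnc
  obtain ⟨t₁', ht₁', e₁⟩ := periodic_reduce x hp hper t₁
  obtain ⟨t₂', ht₂', e₂⟩ := periodic_reduce x hp hper t₂
  have hDpos : 0 < D := by
    have hne' : x t₁' ≠ x t₂' := fun h => hne ((e₁.symm.trans h).trans e₂)
    have hpos : 0 < ‖x t₁' - x t₂'‖ := norm_sub_pos_iff.mpr hne'
    exact lt_of_lt_of_le hpos (hD t₁' ht₁' t₂' ht₂')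
  -- V: max speed
  obtain ⟨w₀, hw₀, hw₀max⟩ := hIc.exists_isMaxOn hIne
    (continuous_norm.comp hx'cont).continuousOn
  set V := ‖deriv x w₀‖ with hVdef
  have hV : ∀ u ∈ I, ‖deriv x u‖ ≤ V := fun u hu => isMaxOn_iff.mp hw₀max u hu
  -- A: max acceleration
  obtain ⟨z₀, hz₀, hz₀max⟩ := hIc.exists_isMaxOn hIne
    (continuous_norm.comp hx''cont).continuousOn
  set A := ‖deriv (deriv x) z₀‖ with hAdef
  have hA : ∀ u ∈ I, ‖deriv (deriv x) u‖ ≤ A := fun u hu => isMaxOn_iff.mp hz₀max u hu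
  have hA0 : 0 ≤ A := norm_nonneg _
  have hV0 : 0 ≤ V := norm_nonneg _
  -- step (iii): A ≤ K * D
  have hAKD : A ≤ K * D := by
    refine mean_zero_bound hp hx''cont hint2 (fun s hs => ?_)
    have h1 : deriv (deriv x) z₀ - deriv (deriv x) s
        = gradient f (x s) - gradient f (x z₀) := by
      rw [heq, heq]; abel
    rw [h1]
    calc ‖gradient f (x s) - gradient f (x z₀)‖ ≤ K * ‖x s - x z₀‖ := hLip z₀ s
    _ ≤ K * D := by
        have hK0 : 0 ≤ K := le_trans (norm_nonneg _) (hKub (x 0) (hM 0))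
        exact mul_le_mul_of_nonneg_left (hD s hs z₀ hz₀) hK0
  -- step (ii): V ≤ A * p
  have hVAp : V ≤ A * p := by
    refine mean_zero_bound hp hx'cont hint1 (fun s hs => ?_)
    have h1 : deriv x w₀ - deriv x s = ∫ u in s..w₀, deriv (deriv x) u := by
      rw [intervalIntegral.integral_deriv_eq_sub (fun y _ => hx'diff y)
        (hx''cont.intervalIntegrable _ _)]
    rw [h1]
    have h2 : ‖∫ u in s..w₀, deriv (deriv x) u‖ ≤ A * |w₀ - s| :=
      intervalIntegral.norm_integral_le_of_norm_le_const
        (fun u hu => hA u (hsub s w₀ hs hw₀ hu))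
    have h3 : A * |w₀ - s| ≤ A * p := by
      refine mul_le_mul_of_nonneg_left ?_ hA0
      rw [abs_sub_le_iff]
      constructor <;> linarith [hw₀.1, hw₀.2, hs.1, hs.2]
    linarith
  -- step (i): D ≤ V * p
  have hDVp : D ≤ V * p := by
    have h1 : x q₀.1 - x q₀.2 = ∫ u in q₀.2..q₀.1, deriv x u := by
      rw [intervalIntegral.integral_deriv_eq_sub (fun y _ => hxdiff y)
        (hx'cont.intervalIntegrable _ _)]
    have hq1 : q₀.1 ∈ I := hq₀.1
    have hq2 : q₀.2 ∈ I := hq₀.2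
    have h0 : D = ‖∫ u in q₀.2..q₀.1, deriv x u‖ := by rw [hDdef, h1]
    have h2 : ‖∫ u in q₀.2..q₀.1, deriv x u‖ ≤ V * |q₀.1 - q₀.2| :=
      intervalIntegral.norm_integral_le_of_norm_le_const
        (fun u hu => hV u (hsub q₀.2 q₀.1 hq2 hq1 hu))
    have h3 : V * |q₀.1 - q₀.2| ≤ V * p := by
      refine mul_le_mul_of_nonneg_left ?_ hV0
      rw [abs_sub_le_iff]
      constructor <;> linarith [hq1.1, hq1.2, hq2.1, hq2.2]
    linarith
  -- combine
  have hfinal : 1 ≤ K * p ^ 2 := by nlinarith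
  have hKpos : 0 < K := by nlinarith
  exact ⟨hKpos, by rw [div_le_iff₀ hKpos]; nlinarith⟩
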